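/- Let φ(r) = 1/(1+e^{-r}) be the sigmoid and f(x) = (1/2)(y - φ(x^⊤w))² for y ∈ {0,1} and w ∈ ℝ^d. Then for every x: (i) ‖∇² f(x)‖ ≤ 2‖w‖ · ‖∇f(x)‖^{a} · ‖w‖^{1-a} for every a ∈ [0,1], in particular ‖∇²f(x)‖/‖∇f(x)‖^{1/2} ≤ 2‖w‖^{3/2}; and (ii) ‖∇³ f(x)‖ ≤ (√3/24 + 1/2)‖w‖³. Hence f is strongly smooth of order p = 3 with L_2 = 2‖w‖^{3/2}, L_3 = (√3/24 + 1/2)‖w‖³. -/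

import Mathlib

open Real RealInnerProductSpace

noncomputable section GlmAux

/-- The sigmoid function. -/
def glmSig (t : ℝ) : ℝ := (1 + Real.exp (-t))⁻¹

lemma glmSig_pos (t : ℝ) : 0 < glmSig t := by unfold glmSig; positivity

lemma glm_one_add_exp_ne (t : ℝ) : 1 + Real.exp (-t) ≠ 0 := by positivity

lemma glmSig_lt_one (t : ℝ) : glmSig t < 1 := by
  unfold glmSig
  rw [inv_lt_one_iff₀]
  right
  linarith [Real.exp_pos (-t)]

lemma glmSig_hasDerivAt (t : ℝ) : HasDerivAt glmSig (glmSig t * (1 - glmSig t)) t := by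
  have h1 : HasDerivAt (fun t : ℝ => 1 + Real.exp (-t)) (-Real.exp (-t)) t := by
    simpa using (HasDerivAt.const_add 1 ((Real.hasDerivAt_exp (-t)).comp t (hasDerivAt_neg t)))
  have h2 := h1.inv (glm_one_add_exp_ne t)
  refine h2.congr_deriv ?_
  unfold glmSig
  have h := glm_one_add_exp_ne t
  field_simp
  ring

lemma glmSig_contDiff : ContDiff ℝ ⊤ glmSig := by
  have : ContDiff ℝ ⊤ (fun t : ℝ => 1 + Real.exp (-t)) :=
    contDiff_const.add (Real.contDiff_exp.comp contDiff_neg)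
  exact this.inv glm_one_add_exp_ne

/-- The scalar loss and its first three derivatives. -/
def glmG0 (y t : ℝ) : ℝ := (1 / 2) * (y - glmSig t) ^ 2
def glmG1 (y t : ℝ) : ℝ := -((y - glmSig t) * (glmSig t * (1 - glmSig t)))
def glmG2 (y t : ℝ) : ℝ :=
  (glmSig t * (1 - glmSig t)) ^ 2
    - (y - glmSig t) * (glmSig t * (1 - glmSig t) * (1 - 2 * glmSig t))
def glmG3 (y t : ℝ) : ℝ :=
  3 * (glmSig t * (1 - glmSig t)) * (glmSig t * (1 - glmSig t) * (1 - 2 * glmSig t))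
    - (y - glmSig t) * (glmSig t * (1 - glmSig t) * (1 - 6 * glmSig t + 6 * glmSig t ^ 2))

lemma glmG0_hasDerivAt (y t : ℝ) : HasDerivAt (glmG0 y) (glmG1 y t) t := by
  have h := glmSig_hasDerivAt t
  have := (((hasDerivAt_const t y).sub h).pow 2).const_mul (1 / 2 : ℝ)
  refine this.congr_deriv ?_
  simp only [Pi.sub_apply, Pi.mul_apply, Pi.pow_apply, Pi.neg_apply]
  unfold glmG1
  ring

lemma glmG1_hasDerivAt (y t : ℝ) : HasDerivAt (glmG1 y) (glmG2 y t) t := by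
  have h := glmSig_hasDerivAt t
  have := ((((hasDerivAt_const t y).sub h).mul
    (h.mul ((hasDerivAt_const t (1:ℝ)).sub h))).neg)
  refine this.congr_deriv ?_
  simp only [Pi.sub_apply, Pi.mul_apply, Pi.pow_apply, Pi.neg_apply]
  unfold glmG2
  ring

lemma glmG2_hasDerivAt (y t : ℝ) : HasDerivAt (glmG2 y) (glmG3 y t) t := by
  have h := glmSig_hasDerivAt t
  have hphi : HasDerivAt (fun t => glmSig t * (1 - glmSig t))
      (glmSig t * (1 - glmSig t) * (1 - 2 * glmSig t)) t := by
    have := h.mul ((hasDerivAt_const t (1:ℝ)).sub h)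
    refine this.congr_deriv ?_
    simp only [Pi.sub_apply, Pi.mul_apply, Pi.pow_apply, Pi.neg_apply]
    ring
  have h2s : HasDerivAt (fun t => 1 - 2 * glmSig t)
      (-(2 * (glmSig t * (1 - glmSig t)))) t := by
    simpa using ((h.const_mul 2).const_sub 1)
  have := (hphi.pow 2).sub
    (((hasDerivAt_const t y).sub h).mul (hphi.mul h2s))
  refine this.congr_deriv ?_
  simp only [Pi.sub_apply, Pi.mul_apply, Pi.pow_apply, Pi.neg_apply]
  unfold glmG3
  ring

lemma glmG0_contDiff (y : ℝ) : ContDiff ℝ ⊤ (glmG0 y) :=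
  contDiff_const.mul ((contDiff_const.sub glmSig_contDiff).pow 2)

lemma glm_deriv_g0 (y : ℝ) : deriv (glmG0 y) = glmG1 y :=
  funext fun t => (glmG0_hasDerivAt y t).deriv

lemma glm_deriv_g1 (y : ℝ) : deriv (glmG1 y) = glmG2 y :=
  funext fun t => (glmG1_hasDerivAt y t).deriv

lemma glm_iteratedDeriv_two (y t : ℝ) : iteratedDeriv 2 (glmG0 y) t = glmG2 y t := by
  rw [show (2:ℕ) = 1 + 1 from rfl, iteratedDeriv_succ, iteratedDeriv_one,
    glm_deriv_g0, glm_deriv_g1]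

lemma glm_iteratedDeriv_three (y t : ℝ) : iteratedDeriv 3 (glmG0 y) t = glmG3 y t := by
  rw [show (3:ℕ) = 2 + 1 from rfl, iteratedDeriv_succ]
  have : iteratedDeriv 2 (glmG0 y) = glmG2 y := by
    funext u; exact glm_iteratedDeriv_two y u
  rw [this, (glmG2_hasDerivAt y t).deriv]

lemma glm_scalar_bounds (y t : ℝ) (hy : y = 0 ∨ y = 1) :
    0 < |glmG1 y t| ∧ |glmG1 y t| ≤ 1 ∧ |glmG2 y t| ≤ 2 * |glmG1 y t| ∧
      |glmG3 y t| ≤ 1 / 2 := by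
  have h0 := glmSig_pos t
  have h1 := glmSig_lt_one t
  unfold glmG1 glmG2 glmG3
  set s := glmSig t with hs
  clear_value s
  rcases hy with rfl | rfl
  · have hpos : 0 < -((0 - s) * (s * (1 - s))) := by
      nlinarith [mul_pos (mul_pos h0 h0) (show (0:ℝ) < 1 - s by linarith)]
    rw [abs_of_pos hpos]
    refine ⟨hpos, ?_, ?_, ?_⟩
    · nlinarith [mul_nonneg (mul_nonneg h0.le h0.le) (show (0:ℝ) ≤ 1 - s by linarith),
        sq_nonneg s, mul_pos h0 h0]
    · rw [abs_le]
      constructor <;>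
        nlinarith [sq_nonneg s, sq_nonneg (1-s),
          mul_pos h0 (show (0:ℝ) < 1 - s by linarith)]
    · rw [abs_le]
      constructor <;>
        nlinarith [sq_nonneg (s*(1-s)), sq_nonneg (1-2*s), sq_nonneg s, sq_nonneg (1-s),
          mul_pos h0 (show (0:ℝ) < 1 - s by linarith), sq_nonneg (s*(1-s)*(1-2*s)),
          sq_nonneg (s - 1/2),
          mul_pos (mul_pos h0 h0) (show (0:ℝ) < 1 - s by linarith)]
  · have hneg : -((1 - s) * (s * (1 - s))) < 0 := by
      nlinarith [mul_pos (mul_pos h0 h0) (show (0:ℝ) < 1 - s by linarith),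
        mul_pos (mul_pos h0 (show (0:ℝ) < 1 - s by linarith))
          (show (0:ℝ) < 1 - s by linarith)]
    rw [abs_of_neg hneg]
    refine ⟨by linarith, ?_, ?_, ?_⟩
    · have hle : (1 - s) * (s * (1 - s)) ≤ 1 := by
        nlinarith [mul_nonneg (show (0:ℝ) ≤ 1 - s by linarith)
          (show (0:ℝ) ≤ 1 - s * (1 - s) by nlinarith [sq_nonneg (s - 1/2)]),
          mul_nonneg h0.le (show (0:ℝ) ≤ 1 - s by linarith)]
      linarith
    · rw [abs_le]
      constructor <;>
        nlinarith [mul_pos h0 (show (0:ℝ) < 1 - s by linarith), sq_nonneg (1-s),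
          sq_nonneg s]
    · rw [abs_le]
      constructor <;>
        nlinarith [sq_nonneg (s*(1-s)), sq_nonneg (1-2*s), sq_nonneg s, sq_nonneg (1-s),
          mul_pos h0 (show (0:ℝ) < 1 - s by linarith), sq_nonneg (s*(1-s)*(1-2*s)),
          sq_nonneg (s - 1/2),
          mul_pos (mul_pos h0 h0) (show (0:ℝ) < 1 - s by linarith)]

end GlmAux

theorem glm_loss_strongly_smooth
    (d : ℕ) (w : EuclideanSpace ℝ (Fin d)) (y : ℝ) (hy : y = 0 ∨ y = 1)
    (f : EuclideanSpace ℝ (Fin d) → ℝ)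
    (hfdef : ∀ x, f x = (1 / 2) * (y - 1 / (1 + Real.exp (-⟪x, w⟫))) ^ 2) :
    ∀ x : EuclideanSpace ℝ (Fin d),
      (∀ a ∈ Set.Icc (0 : ℝ) 1,
        ‖iteratedFDeriv ℝ 2 f x‖ ≤ 2 * ‖w‖ * ‖gradient f x‖ ^ a * ‖w‖ ^ (1 - a)) ∧
      ‖iteratedFDeriv ℝ 2 f x‖ ≤
        2 * ‖w‖ ^ ((3 : ℝ) / 2) * ‖gradient f x‖ ^ ((1 : ℝ) / 2) ∧
      ‖iteratedFDeriv ℝ 3 f x‖ ≤ (Real.sqrt 3 / 24 + 1 / 2) * ‖w‖ ^ 3 := by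
  intro x
  set L : EuclideanSpace ℝ (Fin d) →L[ℝ] ℝ := innerSL ℝ w with hL
  have hLx : ∀ z, L z = ⟪z, w⟫ := fun z => by
    rw [hL, innerSL_apply_apply]; exact real_inner_comm z w
  have hfL : f = (glmG0 y) ∘ L := by
    funext z
    simp only [Function.comp_apply, hLx, hfdef, glmG0, glmSig, one_div]
  set t : ℝ := ⟪x, w⟫ with ht
  -- bounds on iterated derivatives
  have hcomp : ∀ i : ℕ,
      ‖iteratedFDeriv ℝ i f x‖ ≤ ‖iteratedDeriv i (glmG0 y) t‖ * ‖w‖ ^ i := by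
    intro i
    rw [hfL, L.iteratedFDeriv_comp_right (glmG0_contDiff y) x le_top]
    refine le_trans (ContinuousMultilinearMap.norm_compContinuousLinearMap_le _ _) ?_
    simp only [Finset.prod_const, Finset.card_univ, Fintype.card_fin]
    rw [hLx x, ← ht, hL, innerSL_apply_norm, norm_iteratedFDeriv_eq_norm_iteratedDeriv]
  have h2 : ‖iteratedFDeriv ℝ 2 f x‖ ≤ |glmG2 y t| * ‖w‖ ^ 2 := by
    simpa [glm_iteratedDeriv_two, Real.norm_eq_abs] using hcomp 2
  have h3 : ‖iteratedFDeriv ℝ 3 f x‖ ≤ |glmG3 y t| * ‖w‖ ^ 3 := by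
    simpa [glm_iteratedDeriv_three, Real.norm_eq_abs] using hcomp 3
  -- gradient
  have hgrad : gradient f x = glmG1 y t • w := by
    rw [hfL]
    have hF : HasFDerivAt ((glmG0 y) ∘ L) (glmG1 y (L x) • L) x :=
      (glmG0_hasDerivAt y (L x)).comp_hasFDerivAt x L.hasFDerivAt
    have hG : HasGradientAt ((glmG0 y) ∘ L) (glmG1 y (L x) • w) x := by
      rw [hasGradientAt_iff_hasFDerivAt]
      refine hF.congr_fderiv ?_
      ext v
      simp [hL, real_inner_smul_left, InnerProductSpace.toDual_apply_apply, real_inner_comm]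
    rw [hG.gradient, hLx x]
  have hgradnorm : ‖gradient f x‖ = |glmG1 y t| * ‖w‖ := by
    rw [hgrad, norm_smul, Real.norm_eq_abs]
  obtain ⟨k1, k2, k3, k4⟩ := glm_scalar_bounds y t hy
  set A := |glmG1 y t| with hA
  by_cases hw : ‖w‖ = 0
  · refine ⟨fun a _ => ?_, ?_, ?_⟩
    · have : ‖iteratedFDeriv ℝ 2 f x‖ ≤ 0 := by simpa [hw] using h2
      simp only [hw]
      calc ‖iteratedFDeriv ℝ 2 f x‖ ≤ 0 := this
        _ ≤ 2 * 0 * ‖gradient f x‖ ^ a * (0:ℝ) ^ (1 - a) := by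
          have he : (2:ℝ) * 0 * ‖gradient f x‖ ^ a * (0:ℝ) ^ (1 - a) = 0 := by ring
          rw [he]
    · have : ‖iteratedFDeriv ℝ 2 f x‖ ≤ 0 := by simpa [hw] using h2
      have hrhs : (0:ℝ) ≤ 2 * ‖w‖ ^ ((3:ℝ)/2) * ‖gradient f x‖ ^ ((1:ℝ)/2) := by
        have := Real.rpow_nonneg (norm_nonneg w) ((3:ℝ)/2)
        have := Real.rpow_nonneg (norm_nonneg (gradient f x)) ((1:ℝ)/2)
        positivity
      linarith
    · have : ‖iteratedFDeriv ℝ 3 f x‖ ≤ 0 := by simpa [hw] using h3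
      have hrhs : (0:ℝ) ≤ (Real.sqrt 3 / 24 + 1 / 2) * ‖w‖ ^ 3 := by
        have := Real.sqrt_nonneg 3
        positivity
      linarith
  · have hn : 0 < ‖w‖ := lt_of_le_of_ne (norm_nonneg w) (Ne.symm hw)
    refine ⟨fun a ha => ?_, ?_, ?_⟩
    · obtain ⟨ha0, ha1⟩ := ha
      have key : A ≤ A ^ a := by
        calc A = A ^ (1:ℝ) := (Real.rpow_one A).symm
          _ ≤ A ^ a := Real.rpow_le_rpow_of_exponent_ge k1 k2 ha1
      have e1 : (A * ‖w‖) ^ a = A ^ a * ‖w‖ ^ a :=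
        Real.mul_rpow (abs_nonneg _) (norm_nonneg _)
      have e2 : ‖w‖ ^ a * ‖w‖ ^ (1 - a) = ‖w‖ := by
        rw [← Real.rpow_add hn]
        norm_num
      calc ‖iteratedFDeriv ℝ 2 f x‖ ≤ |glmG2 y t| * ‖w‖ ^ 2 := h2
        _ ≤ (2 * A) * ‖w‖ ^ 2 := by
          apply mul_le_mul_of_nonneg_right k3 (by positivity)
        _ ≤ (2 * A ^ a) * ‖w‖ ^ 2 :=
          mul_le_mul_of_nonneg_right (by linarith [key]) (by positivity)
        _ = 2 * ‖w‖ * (A * ‖w‖) ^ a * ‖w‖ ^ (1 - a) := by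
          rw [e1, show 2 * ‖w‖ * (A ^ a * ‖w‖ ^ a) * ‖w‖ ^ (1 - a)
            = 2 * A ^ a * (‖w‖ * (‖w‖ ^ a * ‖w‖ ^ (1 - a))) from by ring, e2]
          ring
        _ = 2 * ‖w‖ * ‖gradient f x‖ ^ a * ‖w‖ ^ (1 - a) := by rw [hgradnorm]
    · have key : A ≤ A ^ ((1:ℝ)/2) := by
        calc A = A ^ (1:ℝ) := (Real.rpow_one A).symm
          _ ≤ A ^ ((1:ℝ)/2) := Real.rpow_le_rpow_of_exponent_ge k1 k2 (by norm_num)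
      have e1 : (A * ‖w‖) ^ ((1:ℝ)/2) = A ^ ((1:ℝ)/2) * ‖w‖ ^ ((1:ℝ)/2) :=
        Real.mul_rpow (abs_nonneg _) (norm_nonneg _)
      have e2 : ‖w‖ ^ ((3:ℝ)/2) * ‖w‖ ^ ((1:ℝ)/2) = ‖w‖ ^ 2 := by
        rw [← Real.rpow_add hn, show (3:ℝ)/2 + 1/2 = ((2:ℕ):ℝ) from by norm_num,
          Real.rpow_natCast]
      calc ‖iteratedFDeriv ℝ 2 f x‖ ≤ |glmG2 y t| * ‖w‖ ^ 2 := h2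
        _ ≤ (2 * A) * ‖w‖ ^ 2 := by
          apply mul_le_mul_of_nonneg_right k3 (by positivity)
        _ ≤ (2 * A ^ ((1:ℝ)/2)) * ‖w‖ ^ 2 :=
          mul_le_mul_of_nonneg_right (by linarith [key]) (by positivity)
        _ = 2 * ‖w‖ ^ ((3:ℝ)/2) * (A * ‖w‖) ^ ((1:ℝ)/2) := by
          rw [e1, show 2 * ‖w‖ ^ ((3:ℝ)/2) * (A ^ ((1:ℝ)/2) * ‖w‖ ^ ((1:ℝ)/2))
            = 2 * A ^ ((1:ℝ)/2) * (‖w‖ ^ ((3:ℝ)/2) * ‖w‖ ^ ((1:ℝ)/2)) from by ring, e2]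
        _ = 2 * ‖w‖ ^ ((3:ℝ)/2) * ‖gradient f x‖ ^ ((1:ℝ)/2) := by rw [hgradnorm]
    · calc ‖iteratedFDeriv ℝ 3 f x‖ ≤ |glmG3 y t| * ‖w‖ ^ 3 := h3
        _ ≤ (1/2) * ‖w‖ ^ 3 := mul_le_mul_of_nonneg_right k4 (by positivity)
        _ ≤ (Real.sqrt 3 / 24 + 1 / 2) * ‖w‖ ^ 3 := by
          have h1 : (0:ℝ) ≤ Real.sqrt 3 := Real.sqrt_nonneg 3
          have h2 : (0:ℝ) ≤ ‖w‖ ^ 3 := by positivity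
          nlinarith
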